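/- Let A be a commutative Noetherian ring, X an arbitrary set, and R = A[X] the polynomial ring over A in the indeterminates X, on which the full symmetric group 𝔖_X of all permutations of X acts by permuting indeterminates. Then every 𝔖_X-invariant ideal I of R is finitely generated as an R[𝔖_X]-module; that is, there exists a finite set B ⊆ I such that I equals the ideal of R generated by {σb : σ ∈ 𝔖_X, b ∈ B}. -/

import Mathlib

open MvPolynomial

namespace Stmt0Aux

noncomputable section
open Classical

/-- The set of all renames of elements of `B` by permutations. -/
def orbitSet {A X : Type*} [CommRing A] (B : Set (MvPolynomial X A)) :
    Set (MvPolynomial X A) :=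
  {p | ∃ σ : Equiv.Perm X, ∃ b ∈ B, p = MvPolynomial.rename (⇑σ) b}

def orbitSpan {A X : Type*} [CommRing A] (B : Set (MvPolynomial X A)) :
    Ideal (MvPolynomial X A) :=
  Ideal.span (orbitSet B)

variable {A X : Type*} [CommRing A]

theorem mem_orbitSet_self {B : Set (MvPolynomial X A)} {b} (hb : b ∈ B) : b ∈ orbitSet B :=
  ⟨1, b, hb, by simp⟩

theorem subset_orbitSpan {B : Set (MvPolynomial X A)} : B ⊆ ↑(orbitSpan B) :=
  fun _b hb => Ideal.subset_span (mem_orbitSet_self hb)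

theorem orbitSpan_le {I : Ideal (MvPolynomial X A)}
    (hI : ∀ σ : Equiv.Perm X, ∀ f ∈ I, MvPolynomial.rename (⇑σ) f ∈ I)
    {B : Set (MvPolynomial X A)} (hB : B ⊆ ↑I) : orbitSpan B ≤ I := by
  refine Ideal.span_le.2 ?_
  rintro p ⟨σ, b, hb, rfl⟩
  exact hI σ b (hB hb)

theorem rename_mem_orbitSpan {B : Set (MvPolynomial X A)} (τ : Equiv.Perm X)
    {p} (hp : p ∈ orbitSpan B) : MvPolynomial.rename (⇑τ) p ∈ orbitSpan B := by
  have h1 : MvPolynomial.rename (⇑τ) p ∈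
      Ideal.map (MvPolynomial.rename (⇑τ) : MvPolynomial X A →ₐ[A] MvPolynomial X A)
        (orbitSpan B) := Ideal.mem_map_of_mem _ hp
  have h2 : Ideal.map (MvPolynomial.rename (⇑τ) : MvPolynomial X A →ₐ[A] MvPolynomial X A)
      (orbitSpan B) ≤ orbitSpan B := by
    rw [orbitSpan, Ideal.map_span]
    refine Ideal.span_le.2 ?_
    rintro q ⟨q', ⟨σ, b, hb, rfl⟩, rfl⟩
    refine Ideal.subset_span ⟨τ * σ, b, hb, ?_⟩
    simp [MvPolynomial.rename_rename]
  exact h2 h1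

/-! ### The monomial order on `ℕ →₀ ℕ` -/

/-- `mlt u v` iff at the largest index where they differ, `u` is smaller. -/
def mlt (u v : ℕ →₀ ℕ) : Prop := Finsupp.Lex (fun a b => b < a) (· < ·) u v

theorem mlt_def {u v : ℕ →₀ ℕ} :
    mlt u v ↔ ∃ i, (∀ j, i < j → u j = v j) ∧ u i < v i := Iff.rfl

theorem mlt_wf : WellFounded mlt := by
  haveI : IsTrichotomous ℕ (fun a b : ℕ => b < a) := ⟨fun a b => by omega⟩
  exact Finsupp.Lex.wellFounded' (fun n h => Nat.not_lt_zero n h)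
    (wellFounded_lt) (wellFounded_lt)

theorem mlt_ne {u v : ℕ →₀ ℕ} (h : mlt u v) : u ≠ v := by
  obtain ⟨i, _, hi⟩ := h
  exact fun e => absurd (by rw [e]) hi.ne

theorem mlt_trans {u v w : ℕ →₀ ℕ} (h1 : mlt u v) (h2 : mlt v w) : mlt u w := by
  obtain ⟨i, hi, hlt⟩ := h1
  obtain ⟨i', hi', hlt'⟩ := h2
  rcases lt_trichotomy i i' with h | rfl | h
  · exact ⟨i', fun j hj => (hi j (h.trans hj)).trans (hi' j hj), (hi i' h) ▸ hlt'⟩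
  · exact ⟨i, fun j hj => (hi j hj).trans (hi' j hj), hlt.trans hlt'⟩
  · exact ⟨i, fun j hj => (hi j hj).trans (hi' j (h.trans hj)), by rw [← hi' i h]; exact hlt⟩

theorem mlt_trichot {u v : ℕ →₀ ℕ} (h : u ≠ v) : mlt u v ∨ mlt v u := by
  classical
  have hex : ∃ j, u j ≠ v j := by
    by_contra hc
    push_neg at hc
    exact h (Finsupp.ext hc)
  set s : Finset ℕ := (u.support ∪ v.support).filter (fun j => u j ≠ v j) with hs
  have hsne : s.Nonempty := by
    obtain ⟨j, hj⟩ := hex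
    refine ⟨j, Finset.mem_filter.2 ⟨?_, hj⟩⟩
    rcases Classical.em (u j = 0) with h0 | h0
    · exact Finset.mem_union_right _ (Finsupp.mem_support_iff.2 (fun e => hj (by rw [h0, e])))
    · exact Finset.mem_union_left _ (Finsupp.mem_support_iff.2 h0)
  set i := s.max' hsne with hi
  have himem := s.max'_mem hsne
  have hidiff : u i ≠ v i := (Finset.mem_filter.1 himem).2
  have heq : ∀ j, i < j → u j = v j := by
    intro j hj
    by_contra hne
    have hjm : j ∈ s := by
      refine Finset.mem_filter.2 ⟨?_, hne⟩
      rcases Classical.em (u j = 0) with h0 | h0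
      · exact Finset.mem_union_right _ (Finsupp.mem_support_iff.2 (fun e => hne (by rw [h0, e])))
      · exact Finset.mem_union_left _ (Finsupp.mem_support_iff.2 h0)
    exact absurd (Finset.le_max' s j hjm) (not_le.2 hj)
  rcases lt_or_gt_of_ne hidiff with hlt | hlt
  · exact Or.inl ⟨i, heq, hlt⟩
  · exact Or.inr ⟨i, fun j hj => (heq j hj).symm, hlt⟩

theorem mlt_add_left (w : ℕ →₀ ℕ) {u v : ℕ →₀ ℕ} (h : mlt u v) :
    mlt (w + u) (w + v) := by
  obtain ⟨i, hi, hlt⟩ := h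
  exact ⟨i, fun j hj => by simp [Finsupp.add_apply, hi j hj],
    by simpa [Finsupp.add_apply] using hlt⟩

theorem mlt_mapDomain {π : ℕ → ℕ} (hπ : StrictMono π) {u v : ℕ →₀ ℕ} (h : mlt u v) :
    mlt (Finsupp.mapDomain π u) (Finsupp.mapDomain π v) := by
  obtain ⟨i, hi, hlt⟩ := h
  refine ⟨π i, ?_, ?_⟩
  · intro j hj
    rcases Classical.em (j ∈ Set.range π) with ⟨i', rfl⟩ | hmem
    · rw [Finsupp.mapDomain_apply hπ.injective, Finsupp.mapDomain_apply hπ.injective]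
      exact hi i' (hπ.lt_iff_lt.1 hj)
    · rw [Finsupp.mapDomain_notin_range _ _ hmem, Finsupp.mapDomain_notin_range _ _ hmem]
  · rw [Finsupp.mapDomain_apply hπ.injective, Finsupp.mapDomain_apply hπ.injective]
    exact hlt

theorem exists_mlt_max (s : Finset (ℕ →₀ ℕ)) :
    s = ∅ ∨ ∃ m ∈ s, ∀ m' ∈ s, m' = m ∨ mlt m' m := by
  classical
  induction s using Finset.induction_on with
  | empty => exact Or.inl rfl
  | @insert a s ha ih =>
    right
    rcases ih with rfl | hex
    · exact ⟨a, Finset.mem_insert_self _ _, fun m' hm' => Or.inl (by simpa using hm')⟩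
    obtain ⟨m, hm, hmax⟩ := hex
    rcases eq_or_ne a m with hae | hne
    · subst hae
      refine ⟨a, Finset.mem_insert_self _ _, fun m' hm' => ?_⟩
      rcases Finset.mem_insert.1 hm' with rfl | h
      · exact Or.inl rfl
      · exact hmax m' h
    rcases mlt_trichot hne with h1 | h1
    · refine ⟨m, Finset.mem_insert_of_mem hm, fun m' hm' => ?_⟩
      rcases Finset.mem_insert.1 hm' with rfl | h
      · exact Or.inr h1
      · exact hmax m' h
    · refine ⟨a, Finset.mem_insert_self _ _, fun m' hm' => ?_⟩
      rcases Finset.mem_insert.1 hm' with rfl | h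
      · exact Or.inl rfl
      · rcases hmax m' h with rfl | h2
        · exact Or.inr h1
        · exact Or.inr (mlt_trans h2 h1)

/-- Leading monomial. -/
def lmon (f : MvPolynomial ℕ A) : ℕ →₀ ℕ :=
  if h : f.support = ∅ then 0 else ((exists_mlt_max f.support).resolve_left h).choose

theorem lmon_spec {f : MvPolynomial ℕ A} (hf : f ≠ 0) :
    lmon f ∈ f.support ∧ ∀ m ∈ f.support, m = lmon f ∨ mlt m (lmon f) := by
  have h : f.support ≠ ∅ := fun h0 => hf (MvPolynomial.support_eq_empty.1 h0)
  rw [lmon, dif_neg h]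
  obtain ⟨h1, h2⟩ := ((exists_mlt_max f.support).resolve_left h).choose_spec
  exact ⟨h1, h2⟩

/-! ### The well-quasi-order on monomials -/

/-- Divisibility up to a strictly increasing renaming. -/
def mle (u v : ℕ →₀ ℕ) : Prop := ∃ π : ℕ → ℕ, StrictMono π ∧ ∀ x, u x ≤ v (π x)

theorem mle_refl (u : ℕ →₀ ℕ) : mle u u := ⟨id, strictMono_id, fun _ => le_rfl⟩

theorem mle_trans {u v w : ℕ →₀ ℕ} (h1 : mle u v) (h2 : mle v w) : mle u w := by
  obtain ⟨π, hπ, h1⟩ := h1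
  obtain ⟨π', hπ', h2⟩ := h2
  exact ⟨π' ∘ π, hπ'.comp hπ, fun x => (h1 x).trans (h2 (π x))⟩

/-- Exponent list of a monomial. -/
def expList (u : ℕ →₀ ℕ) : List ℕ := (List.range (u.support.sup id + 1)).map u

theorem expList_getD (u : ℕ →₀ ℕ) (i : ℕ) : (expList u).getD i 0 = u i := by
  rcases lt_or_ge i (u.support.sup id + 1) with hi | hi
  · rw [expList, List.getD_eq_getElem _ _ (by simpa using hi)]
    simp
  · rw [expList, List.getD_eq_default _ _ (by simpa using hi)]
    symm
    rw [← Finsupp.notMem_support_iff]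
    intro hmem
    have : i ≤ u.support.sup id := Finset.le_sup (f := id) hmem
    omega

theorem expList_length (u : ℕ →₀ ℕ) : (expList u).length = u.support.sup id + 1 := by
  simp [expList]

theorem sublistForall₂_exists_map {l₁ l₂ : List ℕ}
    (h : List.SublistForall₂ (· ≤ ·) l₁ l₂) :
    ∃ π : ℕ → ℕ, StrictMono π ∧
      ∀ i, i < l₁.length → π i < l₂.length ∧ l₁.getD i 0 ≤ l₂.getD (π i) 0 := by
  induction h with
  | nil => exact ⟨id, strictMono_id, fun i hi => by simp at hi⟩
  | @cons a b l₁ l₂ hab h ih =>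
    obtain ⟨π, hπ, hspec⟩ := ih
    refine ⟨fun i => Nat.rec 0 (fun i' _ => π i' + 1) i, ?_, ?_⟩
    · intro i j hij
      cases i with
      | zero =>
        cases j with
        | zero => omega
        | succ j' => exact Nat.succ_pos _
      | succ i' =>
        cases j with
        | zero => omega
        | succ j' => exact Nat.succ_lt_succ (hπ (Nat.lt_of_succ_lt_succ hij))
    · intro i hi
      cases i with
      | zero => simpa using hab
      | succ i' =>
        have hlen : i' < l₁.length := by simpa using hi
        obtain ⟨h1, h2⟩ := hspec i' hlen
        constructor
        · simpa using Nat.succ_lt_succ h1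
        · simpa [List.getD_cons_succ] using h2
  | @cons_right b l₁ l₂ h ih =>
    obtain ⟨π, hπ, hspec⟩ := ih
    refine ⟨fun i => π i + 1, fun i j hij => Nat.succ_lt_succ (hπ hij), fun i hi => ?_⟩
    obtain ⟨h1, h2⟩ := hspec i hi
    exact ⟨by simpa using Nat.succ_lt_succ h1, by simpa [List.getD_cons_succ] using h2⟩

theorem mle_of_sublistForall₂ {u v : ℕ →₀ ℕ}
    (h : List.SublistForall₂ (· ≤ ·) (expList u) (expList v)) : mle u v := by
  obtain ⟨π, hπ, hspec⟩ := sublistForall₂_exists_map h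
  refine ⟨π, hπ, fun x => ?_⟩
  rcases lt_or_ge x (expList u).length with hx | hx
  · have := (hspec x hx).2
    rwa [expList_getD, expList_getD] at this
  · have : u x = 0 := by
      rw [← expList_getD u x, List.getD_eq_default _ _ hx]
    simp [this]

theorem mle_pwo : (Set.univ : Set (ℕ →₀ ℕ)).PartiallyWellOrderedOn mle := by
  intro f
  have hunivN : (Set.univ : Set ℕ).IsPWO :=
    (Set.isWF_univ_iff.2 ⟨wellFounded_lt⟩).isPWO
  have hlist := Set.PartiallyWellOrderedOn.partiallyWellOrderedOn_sublistForall₂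
    (r := (· ≤ · : ℕ → ℕ → Prop)) hunivN
  obtain ⟨i, j, hij, hsl⟩ := hlist (fun n => ⟨expList (f n), by simp⟩)
  exact ⟨i, j, hij, mle_of_sublistForall₂ hsl⟩

/-! ### Extending injections on finite sets to permutations of `ℕ` -/

theorem exists_perm_extend (s : Finset ℕ) {π : ℕ → ℕ} (hπ : Function.Injective π) :
    ∃ σ : Equiv.Perm ℕ, ∀ x ∈ s, σ x = π x := by
  classical
  have hS : (↑s : Set ℕ).Finite := s.finite_toSet
  have hSc : ((↑s : Set ℕ)ᶜ).Infinite := hS.infinite_compl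
  have hT : (π '' ↑s).Finite := hS.image π
  have hTc : ((π '' ↑s)ᶜ).Infinite := hT.infinite_compl
  haveI := hSc.to_subtype
  haveI := hTc.to_subtype
  obtain ⟨d1⟩ := nonempty_denumerable ↥((↑s : Set ℕ)ᶜ)
  obtain ⟨d2⟩ := nonempty_denumerable ↥((π '' ↑s)ᶜ)
  let eC : ↥((↑s : Set ℕ)ᶜ) ≃ ↥((π '' ↑s)ᶜ) :=
    (@Denumerable.eqv _ d1).trans (@Denumerable.eqv _ d2).symm
  let e₀ : ↥(↑s : Set ℕ) ≃ ↥(π '' ↑s) := Equiv.Set.image π ↑s hπ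
  obtain ⟨E, hE⟩ := (Equiv.Set.compl e₀).symm eC
  exact ⟨E, fun x hx => by simpa [e₀, Equiv.Set.image, Equiv.Set.imageOfInjOn] using hE ⟨x, hx⟩⟩

/-! ### The core theorem for countably many variables -/

theorem core {A : Type*} [CommRing A] [IsNoetherianRing A]
    (I : Ideal (MvPolynomial ℕ A))
    (hI : ∀ σ : Equiv.Perm ℕ, ∀ f ∈ I, MvPolynomial.rename (⇑σ) f ∈ I) :
    ∃ B : Finset (MvPolynomial ℕ A), ↑B ⊆ (I : Set (MvPolynomial ℕ A)) ∧
      I = orbitSpan (↑B : Set (MvPolynomial ℕ A)) := by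
  classical
  by_contra hcon
  push_neg at hcon
  -- minimal-leading-monomial choice
  have key : ∀ B : Finset (MvPolynomial ℕ A), ↑B ⊆ (I : Set (MvPolynomial ℕ A)) →
      ∃ g, (g ∈ I ∧ g ∉ orbitSpan (↑B : Set (MvPolynomial ℕ A))) ∧
        ∀ g', g' ∈ I → g' ∉ orbitSpan (↑B : Set (MvPolynomial ℕ A)) →
          ¬ mlt (lmon g') (lmon g) := by
    intro B hB
    have hle : orbitSpan (↑B : Set (MvPolynomial ℕ A)) ≤ I := orbitSpan_le hI hB
    have hne : orbitSpan (↑B : Set (MvPolynomial ℕ A)) ≠ I := fun h => hcon B hB h.symm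
    obtain ⟨-, g0, hg0I, hg0⟩ := SetLike.lt_iff_le_and_exists.1 (lt_of_le_of_ne hle hne)
    obtain ⟨μ, hμmem, hμmin⟩ := mlt_wf.has_min
      (lmon '' {g | g ∈ I ∧ g ∉ orbitSpan (↑B : Set (MvPolynomial ℕ A))})
      ⟨_, ⟨g0, ⟨hg0I, hg0⟩, rfl⟩⟩
    obtain ⟨g, hgset, hμ⟩ := hμmem
    exact ⟨g, hgset, fun g' h1 h2 hmlt => hμmin (lmon g') ⟨g', ⟨h1, h2⟩, rfl⟩ (hμ ▸ hmlt)⟩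
  obtain ⟨pickF, hpickF⟩ : ∃ pf : Finset (MvPolynomial ℕ A) → MvPolynomial ℕ A,
      ∀ B : Finset (MvPolynomial ℕ A), ↑B ⊆ (I : Set (MvPolynomial ℕ A)) →
        (pf B ∈ I ∧ pf B ∉ orbitSpan (↑B : Set (MvPolynomial ℕ A))) ∧
        ∀ g', g' ∈ I → g' ∉ orbitSpan (↑B : Set (MvPolynomial ℕ A)) →
          ¬ mlt (lmon g') (lmon (pf B)) := by
    refine ⟨fun B => if h : ↑B ⊆ (I : Set (MvPolynomial ℕ A)) then (key B h).choose else 0,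
      fun B hB => ?_⟩
    simp only [dif_pos hB]
    exact (key B hB).choose_spec
  set F : ℕ → Finset (MvPolynomial ℕ A) :=
    fun n => Nat.rec ∅ (fun _ B => insert (pickF B) B) n with hF
  have hFsucc : ∀ n, F (n + 1) = insert (pickF (F n)) (F n) := fun n => rfl
  have hFI : ∀ n, ↑(F n) ⊆ (I : Set (MvPolynomial ℕ A)) := by
    intro n
    induction n with
    | zero => simp [hF]
    | succ n ih =>
      rw [hFsucc n, Finset.coe_insert]
      exact Set.insert_subset ((hpickF (F n) ih).1.1) ih
  set f : ℕ → MvPolynomial ℕ A := fun n => pickF (F n) with hf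
  have hfI : ∀ n, f n ∈ I := fun n => (hpickF _ (hFI n)).1.1
  have hfJ : ∀ n, f n ∉ orbitSpan (↑(F n) : Set (MvPolynomial ℕ A)) :=
    fun n => (hpickF _ (hFI n)).1.2
  have hfmin : ∀ n, ∀ g', g' ∈ I → g' ∉ orbitSpan (↑(F n) : Set (MvPolynomial ℕ A)) →
      ¬ mlt (lmon g') (lmon (f n)) := fun n => (hpickF _ (hFI n)).2
  have hFmono : Monotone F := monotone_nat_of_le_succ (fun n => by
    rw [hFsucc n]; exact Finset.subset_insert _ _)
  have hmemF : ∀ {m n : ℕ}, m < n → f m ∈ F n := by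
    intro m n h
    exact hFmono h (by rw [hFsucc m]; exact Finset.mem_insert_self _ _)
  have hfne : ∀ n, f n ≠ 0 := fun n h => hfJ n (h ▸ Ideal.zero_mem _)
  -- monotone subsequence for the wqo
  haveI : IsTrans (ℕ →₀ ℕ) mle := ⟨fun _ _ _ => mle_trans⟩
  haveI : IsRefl (ℕ →₀ ℕ) mle := ⟨mle_refl⟩
  haveI : IsPreorder (ℕ →₀ ℕ) mle := { refl := mle_refl, trans := fun _ _ _ => mle_trans }
  obtain ⟨g, hg⟩ := mle_pwo.exists_monotone_subseq (f := fun n => lmon (f n))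
    (fun n => Set.mem_univ _)
  -- leading coefficients
  set c : ℕ → A := fun k => MvPolynomial.coeff (lmon (f (g k))) (f (g k)) with hc
  set CI : ℕ →o Ideal A := ⟨fun K => Ideal.span (c '' Set.Iic K),
    fun K K' h => Ideal.span_mono (Set.image_mono (Set.Iic_subset_Iic.2 h))⟩ with hCI
  obtain ⟨N, hN⟩ := monotone_stabilizes_iff_noetherian.mpr ‹IsNoetherianRing A› CI
  have hcN : c (N + 1) ∈ Ideal.span (c '' Set.Iic N) := by
    have h1 : c (N + 1) ∈ CI (N + 1) :=
      Ideal.subset_span ⟨N + 1, Set.mem_Iic.2 le_rfl, rfl⟩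
    rwa [← hN (N + 1) (Nat.le_succ N)] at h1
  have himg : c '' Set.Iic N = Set.range (fun k : Fin (N + 1) => c ↑k) := by
    ext a
    constructor
    · rintro ⟨k, hk, rfl⟩
      exact ⟨⟨k, Nat.lt_succ_of_le (Set.mem_Iic.1 hk)⟩, rfl⟩
    · rintro ⟨k, rfl⟩
      exact ⟨↑k, Set.mem_Iic.2 (Nat.le_of_lt_succ k.2), rfl⟩
  rw [himg] at hcN
  obtain ⟨a, ha⟩ := (Submodule.mem_span_range_iff_exists_fun A).1 hcN
  -- set up the top element
  set j : ℕ := g (N + 1) with hj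
  set M : ℕ →₀ ℕ := lmon (f j) with hM
  -- for each k, a strictly increasing witness
  have hmlek : ∀ k : Fin (N + 1), mle (lmon (f (g ↑k))) M :=
    fun k => hg ↑k (N + 1) k.2.le
  choose π hπmono hπle using hmlek
  -- permutations agreeing with the increasing witnesses on all relevant variables
  have hperm : ∀ k : Fin (N + 1), ∃ σ : Equiv.Perm ℕ,
      ∀ x ∈ (f (g ↑k)).support.biUnion Finsupp.support, σ x = π k x :=
    fun k => exists_perm_extend _ (hπmono k).injective
  choose σ hσ using hperm
  -- renaming acts like the increasing witness on monomials of `f (g k)`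
  have hren : ∀ (k : Fin (N + 1)) (m : ℕ →₀ ℕ), m ∈ (f (g ↑k)).support →
      Finsupp.mapDomain (⇑(σ k)) m = Finsupp.mapDomain (π k) m := by
    intro k m hm
    exact Finsupp.mapDomain_congr (fun x hx => hσ k x (Finset.mem_biUnion.2 ⟨m, hm, hx⟩))
  -- the monomial shifts
  have hmaple : ∀ k : Fin (N + 1), Finsupp.mapDomain (π k) (lmon (f (g ↑k))) ≤ M := by
    intro k
    rw [Finsupp.le_iff]
    intro x hx
    rcases Classical.em (x ∈ Set.range (π k)) with ⟨y, rfl⟩ | hmem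
    · rw [Finsupp.mapDomain_apply (hπmono k).injective]
      exact hπle k y
    · exact absurd hx (by
        rw [Finsupp.notMem_support_iff]
        exact Finsupp.mapDomain_notin_range _ _ hmem)
  set d : Fin (N + 1) → (ℕ →₀ ℕ) :=
    fun k => M - Finsupp.mapDomain (π k) (lmon (f (g ↑k))) with hd
  have hdk : ∀ k, d k + Finsupp.mapDomain (π k) (lmon (f (g ↑k))) = M := by
    intro k
    rw [hd]
    exact tsub_add_cancel_of_le (hmaple k)
  -- the subtracted terms
  set t : Fin (N + 1) → MvPolynomial ℕ A :=
    fun k => MvPolynomial.monomial (d k) (a k) *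
      MvPolynomial.rename (⇑(σ k)) (f (g ↑k)) with ht
  set h : MvPolynomial ℕ A := f j - ∑ k, t k with hh
  -- coefficient of M in each term
  have hcoefft : ∀ k, MvPolynomial.coeff M (t k) = a k * c k := by
    intro k
    rw [ht]
    have := hdk k
    calc MvPolynomial.coeff M (MvPolynomial.monomial (d k) (a k) *
          MvPolynomial.rename (⇑(σ k)) (f (g ↑k)))
        = MvPolynomial.coeff (d k + Finsupp.mapDomain (π k) (lmon (f (g ↑k))))
          (MvPolynomial.monomial (d k) (a k) *
            MvPolynomial.rename (⇑(σ k)) (f (g ↑k))) := by rw [hdk k]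
      _ = a k * MvPolynomial.coeff (Finsupp.mapDomain (π k) (lmon (f (g ↑k))))
          (MvPolynomial.rename (⇑(σ k)) (f (g ↑k))) := by
            rw [MvPolynomial.coeff_monomial_mul]
      _ = a k * c k := by
            rw [← hren k _ (lmon_spec (hfne (g ↑k))).1,
              MvPolynomial.coeff_rename_mapDomain _ (σ k).injective]
  -- every monomial of each term is `M` or below
  have hterm_mlt : ∀ (k) (ν : ℕ →₀ ℕ), MvPolynomial.coeff ν (t k) ≠ 0 →
      ν = M ∨ mlt ν M := by
    intro k ν hν
    rw [ht] at hν
    rw [MvPolynomial.coeff_monomial_mul'] at hν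
    split_ifs at hν with hle0
    · have hcoeff : MvPolynomial.coeff (ν - d k)
          (MvPolynomial.rename (⇑(σ k)) (f (g ↑k))) ≠ 0 := by
        intro h0
        rw [h0, mul_zero] at hν
        exact hν rfl
      obtain ⟨u, hu, hu0⟩ := MvPolynomial.coeff_rename_ne_zero _ _ _ hcoeff
      have humem : u ∈ (f (g ↑k)).support := MvPolynomial.mem_support_iff.2 hu0
      have hνeq : ν = d k + Finsupp.mapDomain (⇑(σ k)) u := by
        rw [hu]
        exact (add_tsub_cancel_of_le hle0).symm
      rcases (lmon_spec (hfne (g ↑k))).2 u humem with rfl | hmltu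
      · left
        rw [hνeq, hren k _ humem, hdk k]
      · right
        rw [hνeq, hren k _ humem]
        have h1 := mlt_add_left (d k) (mlt_mapDomain (hπmono k) hmltu)
        rwa [hdk k] at h1
    · exact absurd rfl hν
  -- the coefficient of M in h vanishes
  have hcoeffM : MvPolynomial.coeff M h = 0 := by
    rw [hh, MvPolynomial.coeff_sub, MvPolynomial.coeff_sum]
    have h1 : MvPolynomial.coeff M (f j) = c (N + 1) := rfl
    rw [h1]
    have h2 : ∀ k ∈ Finset.univ, MvPolynomial.coeff M (t k) = a k * c k :=
      fun k _ => hcoefft k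
    rw [Finset.sum_congr rfl h2]
    have h3 : ∑ k, a k * c k = c (N + 1) := by
      simpa [smul_eq_mul] using ha
    rw [h3, sub_self]
  -- h is in I
  have hhI : h ∈ I := by
    rw [hh]
    refine Ideal.sub_mem _ (hfI j) (Ideal.sum_mem _ fun k _ => ?_)
    exact Ideal.mul_mem_left _ _ (hI (σ k) _ (hfI (g ↑k)))
  -- each term is in the orbit span of F j
  have htermJ : ∀ k, t k ∈ orbitSpan (↑(F j) : Set (MvPolynomial ℕ A)) := by
    intro k
    refine Ideal.mul_mem_left _ _ ?_
    refine Ideal.subset_span ⟨σ k, f (g ↑k), ?_, rfl⟩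
    exact_mod_cast hmemF (g.strictMono k.2)
  -- h is not in the orbit span of F j
  have hhJ : h ∉ orbitSpan (↑(F j) : Set (MvPolynomial ℕ A)) := by
    intro hmem
    apply hfJ j
    have : f j = h + ∑ k, t k := by rw [hh]; ring
    rw [this]
    exact Ideal.add_mem _ hmem (Ideal.sum_mem _ fun k _ => htermJ k)
  have hh0 : h ≠ 0 := fun h0 => hhJ (h0 ▸ Ideal.zero_mem _)
  -- the leading monomial of h is strictly below M
  have hlmh : mlt (lmon h) M := by
    have hmem := (lmon_spec hh0).1
    have hcoeffne : MvPolynomial.coeff (lmon h) h ≠ 0 :=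
      MvPolynomial.mem_support_iff.1 hmem
    have hneM : lmon h ≠ M := by
      intro e
      rw [e, hcoeffM] at hcoeffne
      exact hcoeffne rfl
    have hcases : MvPolynomial.coeff (lmon h) (f j) ≠ 0 ∨
        ∃ k, MvPolynomial.coeff (lmon h) (t k) ≠ 0 := by
      by_contra hc
      push_neg at hc
      apply hcoeffne
      rw [hh, MvPolynomial.coeff_sub, hc.1, MvPolynomial.coeff_sum]
      rw [Finset.sum_eq_zero fun k _ => hc.2 k, sub_zero]
    rcases hcases with h1 | ⟨k, h1⟩
    · rcases (lmon_spec (hfne j)).2 (lmon h) (MvPolynomial.mem_support_iff.2 h1) with e | hm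
      · exact absurd e hneM
      · exact hm
    · rcases hterm_mlt k (lmon h) h1 with e | hm
      · exact absurd e hneM
      · exact hm
  exact hfmin j h hhI hhJ hlmh

/-! ### The general theorem -/

theorem main {A : Type*} [CommRing A] [IsNoetherianRing A] {X : Type*}
    (I : Ideal (MvPolynomial X A))
    (hI : ∀ σ : Equiv.Perm X, ∀ f ∈ I, MvPolynomial.rename (⇑σ) f ∈ I) :
    ∃ B : Finset (MvPolynomial X A), ↑B ⊆ (I : Set (MvPolynomial X A)) ∧
      I = orbitSpan (↑B : Set (MvPolynomial X A)) := by
  classical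
  rcases finite_or_infinite X with hfin | hinf
  · -- finite case: Hilbert basis theorem
    obtain ⟨s, hs⟩ : I.FG := IsNoetherian.noetherian I
    refine ⟨s, fun x hx => hs ▸ Ideal.subset_span hx, ?_⟩
    refine le_antisymm ?_ (orbitSpan_le hI (fun x hx => hs ▸ Ideal.subset_span hx))
    rw [← hs]
    exact Ideal.span_le.2 (fun b hb => subset_orbitSpan hb)
  · -- infinite case
    by_contra hcon
    push_neg at hcon
    have key : ∀ B : Finset (MvPolynomial X A), ↑B ⊆ (I : Set (MvPolynomial X A)) →
        ∃ g, g ∈ I ∧ g ∉ orbitSpan (↑B : Set (MvPolynomial X A)) := by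
      intro B hB
      have hle : orbitSpan (↑B : Set (MvPolynomial X A)) ≤ I := orbitSpan_le hI hB
      have hne : orbitSpan (↑B : Set (MvPolynomial X A)) ≠ I := fun h => hcon B hB h.symm
      obtain ⟨-, g0, hg0I, hg0⟩ := SetLike.lt_iff_le_and_exists.1 (lt_of_le_of_ne hle hne)
      exact ⟨g0, hg0I, hg0⟩
    obtain ⟨pickF, hpickF⟩ : ∃ pf : Finset (MvPolynomial X A) → MvPolynomial X A,
        ∀ B : Finset (MvPolynomial X A), ↑B ⊆ (I : Set (MvPolynomial X A)) →
          pf B ∈ I ∧ pf B ∉ orbitSpan (↑B : Set (MvPolynomial X A)) := by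
      refine ⟨fun B => if h : ↑B ⊆ (I : Set (MvPolynomial X A)) then (key B h).choose else 0,
        fun B hB => ?_⟩
      simp only [dif_pos hB]
      exact (key B hB).choose_spec
    set F : ℕ → Finset (MvPolynomial X A) :=
      fun n => Nat.rec ∅ (fun _ B => insert (pickF B) B) n with hF
    have hFsucc : ∀ n, F (n + 1) = insert (pickF (F n)) (F n) := fun n => rfl
    have hFI : ∀ n, ↑(F n) ⊆ (I : Set (MvPolynomial X A)) := by
      intro n
      induction n with
      | zero => simp [hF]
      | succ n ih =>
        rw [hFsucc n, Finset.coe_insert]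
        exact Set.insert_subset ((hpickF (F n) ih).1) ih
    set f : ℕ → MvPolynomial X A := fun n => pickF (F n) with hf
    have hfI : ∀ n, f n ∈ I := fun n => (hpickF _ (hFI n)).1
    have hfJ : ∀ n, f n ∉ orbitSpan (↑(F n) : Set (MvPolynomial X A)) :=
      fun n => (hpickF _ (hFI n)).2
    have hFmono : Monotone F := monotone_nat_of_le_succ (fun n => by
      rw [hFsucc n]; exact Finset.subset_insert _ _)
    have hmemF : ∀ {m n : ℕ}, m < n → f m ∈ F n := by
      intro m n h
      exact hFmono h (by rw [hFsucc m]; exact Finset.mem_insert_self _ _)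
    -- write each f n over finitely many variables
    choose sv q hq using fun n => MvPolynomial.exists_finset_rename (f n)
    -- a countably infinite set of variables containing all of them
    set Y : Set X := (⋃ n, ↑(sv n)) ∪ Set.range (Infinite.natEmbedding X) with hY
    have hYcount : Y.Countable :=
      Set.Countable.union (Set.countable_iUnion (fun n => (sv n).countable_toSet))
        (Set.countable_range _)
    have hYinf : Y.Infinite :=
      Set.Infinite.mono Set.subset_union_right
        (Set.infinite_range_of_injective (Infinite.natEmbedding X).injective)
    haveI := hYinf.to_subtype
    haveI : Countable ↥Y := hYcount.to_subtype
    obtain ⟨dY⟩ := nonempty_denumerable ↥Y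
    set e : ↥Y ≃ ℕ := @Denumerable.eqv _ dY with he
    set jmap : ℕ → X := fun n => ↑(e.symm n) with hjmap
    have hjinj : Function.Injective jmap :=
      fun a b hab => e.symm.injective (Subtype.coe_injective hab)
    -- the conjugation property
    have hconj : ∀ σ : Equiv.Perm ℕ, ∃ τ : Equiv.Perm X, jmap ∘ ⇑σ = ⇑τ ∘ jmap := by
      intro σ
      refine ⟨σ.extendDomain e.symm, funext fun n => ?_⟩
      exact (Equiv.Perm.extendDomain_apply_image σ e.symm n).symm
    -- transfer each f n to MvPolynomial ℕ A
    have hmemY : ∀ (n : ℕ) (x : {x // x ∈ sv n}), (↑x : X) ∈ Y :=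
      fun n x => Set.mem_union_left _ (Set.mem_iUnion.2 ⟨n, x.2⟩)
    set qn : ℕ → MvPolynomial ℕ A :=
      fun n => MvPolynomial.rename (fun x : {x // x ∈ sv n} => e ⟨↑x, hmemY n x⟩) (q n) with hqn
    have hqn' : ∀ n, MvPolynomial.rename jmap (qn n) = f n := by
      intro n
      rw [hqn]
      rw [MvPolynomial.rename_rename]
      have hfun : (jmap ∘ fun x : {x // x ∈ sv n} => e ⟨↑x, hmemY n x⟩) =
          (Subtype.val : {x // x ∈ sv n} → X) := by
        funext x
        show jmap (e ⟨↑x, hmemY n x⟩) = ↑x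
        rw [hjmap]
        simp
      rw [hfun, ← hq n]
    -- the limit ideal downstairs
    set J : ℕ → Ideal (MvPolynomial X A) :=
      fun n => orbitSpan (↑(F n) : Set (MvPolynomial X A)) with hJ
    have hJmono : Monotone J := fun m n hmn =>
      Ideal.span_mono (fun p => by
        rintro ⟨σ, b, hb, rfl⟩
        exact ⟨σ, b, hFmono hmn hb, rfl⟩)
    have hJdir : Directed (· ≤ ·) J := hJmono.directed_le
    set φ : MvPolynomial ℕ A →+* MvPolynomial X A :=
      (MvPolynomial.rename jmap : MvPolynomial ℕ A →ₐ[A] MvPolynomial X A).toRingHom with hφ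
    set K : Ideal (MvPolynomial ℕ A) := Ideal.comap φ (⨆ n, J n) with hK
    -- K is invariant
    have hKinv : ∀ σ : Equiv.Perm ℕ, ∀ p ∈ K, MvPolynomial.rename (⇑σ) p ∈ K := by
      intro σ p hp
      rw [hK, Ideal.mem_comap] at hp ⊢
      obtain ⟨τ, hτ⟩ := hconj σ
      have h1 : φ (MvPolynomial.rename (⇑σ) p) =
          MvPolynomial.rename (⇑τ) (φ p) := by
        show MvPolynomial.rename jmap (MvPolynomial.rename (⇑σ) p) =
          MvPolynomial.rename (⇑τ) (MvPolynomial.rename jmap p)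
        rw [MvPolynomial.rename_rename, MvPolynomial.rename_rename, hτ]
      rw [h1]
      obtain ⟨n, hn⟩ := (Submodule.mem_iSup_of_directed _ hJdir).1 hp
      exact (Submodule.mem_iSup_of_directed _ hJdir).2 ⟨n, rename_mem_orbitSpan τ hn⟩
    -- apply the core theorem
    obtain ⟨B', hB'sub, hB'⟩ := core K hKinv
    -- all generators map into some J N
    have hBN : ∀ b : {x // x ∈ B'}, ∃ n, φ ↑b ∈ J n := by
      intro b
      have : (↑b : MvPolynomial ℕ A) ∈ K := hB'sub b.2
      rw [hK, Ideal.mem_comap] at this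
      exact (Submodule.mem_iSup_of_directed _ hJdir).1 this
    choose nb hnb using hBN
    set N : ℕ := Finset.univ.sup (fun b : {x // x ∈ B'} => nb b) with hN
    have hBN' : ∀ b : {x // x ∈ B'}, φ ↑b ∈ J N :=
      fun b => hJmono (Finset.le_sup (Finset.mem_univ b)) (hnb b)
    -- K is contained in the comap of J N
    have hKN : K ≤ Ideal.comap φ (J N) := by
      rw [hB']
      refine Ideal.span_le.2 ?_
      rintro p ⟨σ, b, hb, rfl⟩
      rw [SetLike.mem_coe, Ideal.mem_comap]
      obtain ⟨τ, hτ⟩ := hconj σ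
      have h1 : φ (MvPolynomial.rename (⇑σ) b) =
          MvPolynomial.rename (⇑τ) (φ b) := by
        show MvPolynomial.rename jmap (MvPolynomial.rename (⇑σ) b) =
          MvPolynomial.rename (⇑τ) (MvPolynomial.rename jmap b)
        rw [MvPolynomial.rename_rename, MvPolynomial.rename_rename, hτ]
      rw [h1]
      exact rename_mem_orbitSpan τ (hBN' ⟨b, hb⟩)
    -- contradiction
    have hfNK : qn N ∈ K := by
      rw [hK, Ideal.mem_comap]
      show MvPolynomial.rename jmap (qn N) ∈ _
      rw [hqn' N]
      refine (Submodule.mem_iSup_of_directed _ hJdir).2 ⟨N + 1, ?_⟩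
      exact subset_orbitSpan (a := f N) (by
        exact_mod_cast hmemF (Nat.lt_succ_self N))
    have hcontra : f N ∈ J N := by
      have h2 := hKN hfNK
      rw [Ideal.mem_comap] at h2
      have h3 : MvPolynomial.rename jmap (qn N) ∈ J N := h2
      rwa [hqn' N] at h3
    exact hfJ N hcontra

end

end Stmt0Aux

/-- Let `A` be a commutative Noetherian ring, `X` an arbitrary set and
`R = A[X]` the polynomial ring, on which the full symmetric group of `X` acts by
permuting indeterminates.  Every invariant ideal `I` of `R` is finitely generated as an
`R[𝔖_X]`-module: there is a finite `B ⊆ I` with `I = ⟨σb : σ ∈ 𝔖_X, b ∈ B⟩_R`. -/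
theorem stmt0 {A : Type*} [CommRing A] [IsNoetherianRing A] {X : Type*}
    (I : Ideal (MvPolynomial X A))
    (hI : ∀ σ : Equiv.Perm X, ∀ f ∈ I, MvPolynomial.rename (⇑σ) f ∈ I) :
    ∃ B : Finset (MvPolynomial X A), ↑B ⊆ (I : Set (MvPolynomial X A)) ∧
      I = Ideal.span {p : MvPolynomial X A |
        ∃ σ : Equiv.Perm X, ∃ b ∈ B, p = MvPolynomial.rename (⇑σ) b} := by
  obtain ⟨B, hB1, hB2⟩ := Stmt0Aux.main I hI
  exact ⟨B, hB1, hB2⟩
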